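/- For every integer N ≥ 2 and every configuration η ∈ Σ_N, the jump rates of the model satisfy ∑_{(x,y)∈E_N} c_{x,y}(η) = ∑_{(x,y)∈E_N} c_{y,x}(η^{x,y}), where the sums run over all directed edges of the discrete torus. (This identity expresses the stationarity of the uniform canonical measures.) -/
import Mathlib


open Finset

/-- The two-dimensional discrete torus `Λ_N = ℤ²/Nℤ²`. -/
abbrev Torus (N : ℕ) := ZMod N × ZMod N

/-- Particle configurations `Σ_N = {0,1}^{Λ_N}`. -/
abbrev Config (N : ℕ) := Torus N → Bool

/-- Occupation number as a real number. -/
noncomputable def bval (b : Bool) : ℝ := if b then 1 else 0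

/-- The four unit directions `e¹, e², -e¹, -e²`. -/
def dvec (N : ℕ) : Fin 4 → Torus N := ![(1, 0), (0, 1), (-1, 0), (0, -1)]

/-- Reversal of a direction. -/
def rev : Fin 4 → Fin 4 := ![2, 3, 0, 1]

/-- The two coordinate unit vectors `e¹, e²`. -/
def ee (N : ℕ) : Fin 2 → Torus N := ![(1, 0), (0, 1)]

/-- `η^{x,y}` : exchange the occupation values at `x` and `y`. -/
def swap {N : ℕ} (η : Config N) (x y : Torus N) : Config N :=
  fun z => if z = x then η y else if z = y then η x else η z

/-- Translation of configurations, `(τ_z η)(w) = η(w - z)`. -/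
def trc {N : ℕ} (z : Torus N) (η : Config N) : Config N := fun w => η (w - z)

/-- Translation of functions, `(τ_z h)(η) = h(τ_{-z} η)`. -/
def trf {N : ℕ} (z : Torus N) (h : Config N → ℝ) : Config N → ℝ := fun η => h (trc (-z) η)

/-- The local function `g` on the face with lower-left corner `0`. -/
noncomputable def gfun {N : ℕ} (α : ℝ) (η : Config N) : ℝ :=
  if η (0, 0) = true ∧ η (1, 1) = true ∧ η (1, 0) = false ∧ η (0, 1) = false then α
  else if η (1, 0) = true ∧ η (0, 1) = true ∧ η (0, 0) = false ∧ η (1, 1) = false then α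
  else 0

/-- Lower-left corner of the anticlockwise face `f⁺(x, x + dvec d)` traversing the edge
according to its orientation. -/
def fplus {N : ℕ} (x : Torus N) (d : Fin 4) : Torus N :=
  ![x, x - (1, 0), x - (1, 0) - (0, 1), x - (0, 1)] d

/-- Lower-left corner of the anticlockwise face `f⁻(x, x + dvec d)` traversing the reversed
edge according to its orientation. -/
def fminus {N : ℕ} (x : Torus N) (d : Fin 4) : Torus N :=
  ![x - (0, 1), x, x - (1, 0), x - (1, 0) - (0, 1)] d

/-- The jump rate `c_{x, x + dvec d}(η)`. -/
noncomputable def rate {N : ℕ} (α : ℝ) (η : Config N) (x : Torus N) (d : Fin 4) : ℝ :=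
  bval (η x) * (1 - bval (η (x + dvec N d)))
    + bval (η x) * (trf (fplus x d) (gfun α) η - trf (fminus x d) (gfun α) η)

/-- The Bernoulli product measure `ν_ρ`. -/
noncomputable def nu {N : ℕ} [NeZero N] (ρ : ℝ) (η : Config N) : ℝ :=
  ∏ x : Torus N, if η x then ρ else 1 - ρ

/-- The generator `L_N`. -/
noncomputable def gen {N : ℕ} [NeZero N] (α : ℝ) (F : Config N → ℝ) (η : Config N) : ℝ :=
  ∑ x : Torus N, ∑ d : Fin 4, rate α η x d * (F (swap η x (x + dvec N d)) - F η)

/-- Sum of an edge function over the four directed edges of the anticlockwise oriented face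
with lower-left corner `w`. -/
noncomputable def faceCCW {N : ℕ} (F : Torus N → Fin 4 → ℝ) (w : Torus N) : ℝ :=
  F w 0 + F (w + (1, 0)) 1 + F (w + (1, 0) + (0, 1)) 2 + F (w + (0, 1)) 3

/-- Sum of an edge function over the four directed edges of the clockwise oriented face
with lower-left corner `w`. -/
noncomputable def faceCW {N : ℕ} (F : Torus N → Fin 4 → ℝ) (w : Torus N) : ℝ :=
  F w 1 + F (w + (0, 1)) 0 + F (w + (1, 0) + (0, 1)) 3 + F (w + (1, 0)) 2


section Aux

variable {N : ℕ}

lemma swap_left (η : Config N) (x y : Torus N) : swap η x y x = η y := by simp [swap]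

lemma swap_right (η : Config N) (x y : Torus N) : swap η x y y = η x := by
  by_cases h : y = x
  · subst h; simp [swap]
  · simp [swap, h]

/-- `gfun` on the face with corner `w`, as a function of the four corner values. -/
noncomputable def Gb (α : ℝ) (p q r s : Bool) : ℝ :=
  if p = true ∧ s = true ∧ q = false ∧ r = false then α
  else if q = true ∧ r = true ∧ p = false ∧ s = false then α else 0

lemma trf_gfun (α : ℝ) (w : Torus N) (ξ : Config N) :
    trf w (gfun α) ξ = Gb α (ξ w) (ξ (w + (1,0))) (ξ (w + (0,1))) (ξ (w + (1,1))) := by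
  simp only [trf, trc, gfun, Gb, sub_neg_eq_add]
  have h0 : ((0:ZMod N), (0:ZMod N)) + w = w := by simp [Prod.ext_iff]
  have h1 : ((1:ZMod N), (0:ZMod N)) + w = w + (1,0) := add_comm _ _
  have h2 : ((0:ZMod N), (1:ZMod N)) + w = w + (0,1) := add_comm _ _
  have h3 : ((1:ZMod N), (1:ZMod N)) + w = w + (1,1) := add_comm _ _
  rw [h0, h1, h2, h3]

lemma key (α : ℝ) (p q r s : Bool) :
    bval p * (Gb α p q r s + Gb α q p r s)
  + bval q * (Gb α p q r s + Gb α p s r q)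
  + bval s * (Gb α p q r s + Gb α p q s r)
  + bval r * (Gb α p q r s + Gb α r q p s)
  = bval p * (Gb α p q r s + Gb α r q p s)
  + bval r * (Gb α p q r s + Gb α p q s r)
  + bval s * (Gb α p q r s + Gb α p s r q)
  + bval q * (Gb α p q r s + Gb α q p r s) := by
  cases p <;> cases q <;> cases r <;> cases s <;> simp [bval, Gb]

lemma face_eq [NeZero N] (h1 : (1:ZMod N) ≠ 0) (α : ℝ) (η : Config N) (w : Torus N) :
    faceCCW (fun x d => bval (η x) * (trf (fplus x d) (gfun α) η
        + trf (fplus x d) (gfun α) (swap η x (x + dvec N d)))) w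
  = faceCW (fun x d => bval (η x) * (trf (fminus x d) (gfun α) η
        + trf (fminus x d) (gfun α) (swap η x (x + dvec N d)))) w := by
  obtain ⟨u, v⟩ := w
  have h1' : (0:ZMod N) ≠ 1 := fun h => h1 h.symm
  simp only [faceCCW, faceCW, fplus, fminus, dvec, Matrix.cons_val_zero, Matrix.cons_val_one,
    Matrix.head_cons, Matrix.cons_val_two, Matrix.tail_cons, Matrix.cons_val_three,
    Matrix.head_fin_const, Prod.mk_add_mk, Prod.mk_sub_mk, trf_gfun, swap, Prod.mk.injEq,
    add_sub_cancel_right, add_zero, zero_add, sub_zero, add_neg_cancel_right]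
  simp [h1, h1', Prod.mk.injEq, left_eq_add, add_eq_left, add_right_inj,
    eq_self_iff_true, sub_eq_iff_eq_add]
  exact key α (η (u, v)) (η (u + 1, v)) (η (u, v + 1)) (η (u + 1, v + 1))

lemma sum_shift [NeZero N] (F : Torus N → ℝ) (v : Torus N) :
    ∑ x : Torus N, F (x + v) = ∑ x : Torus N, F x :=
  Fintype.sum_equiv (Equiv.addRight v) _ _ (fun _ => rfl)

lemma sum_faceCCW [NeZero N] (F : Torus N → Fin 4 → ℝ) :
    ∑ w : Torus N, faceCCW F w = ∑ x : Torus N, ∑ d : Fin 4, F x d := by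
  simp only [faceCCW, Fin.sum_univ_four, Finset.sum_add_distrib]
  rw [sum_shift (fun x => F x 1), sum_shift (fun x => F (x + (0,1)) 2),
    sum_shift (fun x => F x 2), sum_shift (fun x => F x 3)]

lemma sum_faceCW [NeZero N] (F : Torus N → Fin 4 → ℝ) :
    ∑ w : Torus N, faceCW F w = ∑ x : Torus N, ∑ d : Fin 4, F x d := by
  simp only [faceCW, Fin.sum_univ_four, Finset.sum_add_distrib]
  rw [sum_shift (fun x => F x 0), sum_shift (fun x => F (x + (0,1)) 3),
    sum_shift (fun x => F x 3), sum_shift (fun x => F x 2)]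
  ring

lemma hterm (α : ℝ) (η : Config N) (x : Torus N) (d : Fin 4) :
    rate α (swap η x (x + dvec N d)) (x + dvec N d) (rev d)
      = bval (η x) * (1 - bval (η (x + dvec N d)))
        + bval (η x) * (trf (fminus x d) (gfun α) (swap η x (x + dvec N d))
            - trf (fplus x d) (gfun α) (swap η x (x + dvec N d))) := by
  obtain ⟨u, v⟩ := x
  fin_cases d <;>
    simp [rate, rev, dvec, fplus, fminus, swap_left, swap_right, Prod.mk_add_mk,
      Prod.mk_sub_mk, sub_eq_add_neg, add_assoc]

end Aux

/-- stationarity of the uniform canonical measures,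
`∑_{(x,y)∈E_N} c_{x,y}(η) = ∑_{(x,y)∈E_N} c_{y,x}(η^{x,y})`. -/
theorem stmt_1 (N : ℕ) [NeZero N] (hN : 2 ≤ N) (α : ℝ) (hα : |α| < 1) (η : Config N) :
    (∑ x : Torus N, ∑ d : Fin 4, rate α η x d)
      = ∑ x : Torus N, ∑ d : Fin 4,
          rate α (swap η x (x + dvec N d)) (x + dvec N d) (rev d) := by
  have hfact : Fact (1 < N) := ⟨hN⟩
  have h1 : (1 : ZMod N) ≠ 0 := one_ne_zero
  have main : (∑ x : Torus N, ∑ d : Fin 4, bval (η x) * (trf (fplus x d) (gfun α) η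
          + trf (fplus x d) (gfun α) (swap η x (x + dvec N d))))
      = ∑ x : Torus N, ∑ d : Fin 4, bval (η x) * (trf (fminus x d) (gfun α) η
          + trf (fminus x d) (gfun α) (swap η x (x + dvec N d))) := by
    rw [← sum_faceCCW (fun x d => bval (η x) * (trf (fplus x d) (gfun α) η
          + trf (fplus x d) (gfun α) (swap η x (x + dvec N d)))),
        ← sum_faceCW (fun x d => bval (η x) * (trf (fminus x d) (gfun α) η
          + trf (fminus x d) (gfun α) (swap η x (x + dvec N d))))]
    exact Finset.sum_congr rfl (fun w _ => face_eq h1 α η w)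
  simp only [hterm]
  simp only [rate, mul_add, mul_sub, Finset.sum_add_distrib,
    Finset.sum_sub_distrib] at main ⊢
  linarith [main]
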